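/- In the setting of the parabolic construction, with T ⊆ N a linear subspace, a : T → N an ℓ-symmetric linear map, and the affine action of T on V defined by γ_x(v) = ν(ax)v + x − ½ ℓ(ax,x) v₀: the action of the vector group T on V is free if and only if ker(1 + t·a) = 0 for all t ∈ ℝ (where 1 + t·a is viewed as the map T → N, x ↦ x + t·ax). -/

import Mathlib

/-- A symmetric bilinear form of Lorentzian signature `(+,−,…,−)`. -/
def IsLorentzian {V : Type*} [AddCommGroup V] [Module ℝ V]
    (ℓ : V →ₗ[ℝ] V →ₗ[ℝ] ℝ) : Prop :=
  (∀ u w : V, ℓ u w = ℓ w u) ∧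
  ∃ (n : ℕ) (e : Module.Basis (Fin (n + 1)) ℝ V),
    (∀ i j, i ≠ j → ℓ (e i) (e j) = 0) ∧ ℓ (e 0) (e 0) = 1 ∧
    ∀ i, i ≠ 0 → ℓ (e i) (e i) = -1

/-- `ν(x)v = v + ℓ(v,v₀)x − (ℓ(v,x) + ½ ℓ(v,v₀) ℓ(x,x)) v₀`. -/
noncomputable def nuMap {V : Type*} [AddCommGroup V] [Module ℝ V]
    (ℓ : V →ₗ[ℝ] V →ₗ[ℝ] ℝ) (v₀ x : V) : V →ₗ[ℝ] V where
  toFun v := v + ℓ v v₀ • x - (ℓ v x + (1 / 2) * ℓ v v₀ * ℓ x x) • v₀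
  map_add' u w := by
    simp only [map_add, LinearMap.add_apply]
    module
  map_smul' c v := by
    simp only [map_smul, LinearMap.smul_apply, RingHom.id_apply, smul_eq_mul]
    module

/-- Lemma 3.16 (lastl), first part: in the parabolic construction (type (ii)), with
`T ⊆ N` a linear subspace and `a : T → N` an `ℓ`-symmetric linear map, the affine action
`γ_x(v) = ν(ax)v + x − ½ℓ(ax,x)v₀` of the vector group `T` on `V` is free if and only
if `ker(1 + t·a) = 0` for all `t ∈ ℝ`. -/
theorem parabolic_action_free_iff_ker
    {V : Type*} [AddCommGroup V] [Module ℝ V] [FiniteDimensional ℝ V]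
    (ℓ : V →ₗ[ℝ] V →ₗ[ℝ] ℝ) (hL : IsLorentzian ℓ)
    (v₀ v₁ : V) (hv₀ : ℓ v₀ v₀ = 0) (hv₁ : ℓ v₁ v₁ = 0) (hv₀v₁ : ℓ v₀ v₁ = 1)
    (T : Submodule ℝ V)
    (hT : ∀ x ∈ T, ℓ x v₀ = 0 ∧ ℓ x v₁ = 0)
    (a : T →ₗ[ℝ] V)
    (haN : ∀ x : T, ℓ (a x) v₀ = 0 ∧ ℓ (a x) v₁ = 0)
    (hasymm : ∀ x y : T, ℓ (a x) (y : V) = ℓ (x : V) (a y)) :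
    (∀ (x : T) (v : V),
        nuMap ℓ v₀ (a x) v + (x : V) - ((1 / 2) * ℓ (a x) (x : V)) • v₀ = v → x = 0) ↔
      (∀ (t : ℝ) (x : T), (x : V) + t • a x = 0 → x = 0) := by

  obtain ⟨hsymm, -⟩ := hL
  constructor
  · -- free ⇒ kernel condition
    intro h t x hx
    apply h x (t • v₁)
    have h1 : ℓ (t • v₁) v₀ = t := by
      simp [hsymm v₁ v₀, hv₀v₁]
    have h2 : ℓ (t • v₁) (a x) = 0 := by
      simp [hsymm v₁ (a x), (haN x).2]
    have h3 : ℓ (a x) (x : V) + t * ℓ (a x) (a x) = 0 := by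
      have := congrArg (fun w => ℓ (a x) w) hx
      simpa using this
    simp only [nuMap, LinearMap.coe_mk, AddHom.coe_mk, h1, h2]
    have hA : ℓ (a x) (x : V) = -(t * ℓ (a x) (a x)) := by linarith
    rw [hA]
    have hx' : (x : V) = -(t • a x) := by
      have := hx
      linear_combination (norm := module) this
    rw [hx']
    module
  · -- kernel condition ⇒ free
    intro h x v hv
    have e : ℓ v v₀ • a x + (x : V)
        - (ℓ v (a x) + 1 / 2 * ℓ v v₀ * ℓ (a x) (a x) + 1 / 2 * ℓ (a x) (x : V)) • v₀
        = 0 := by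
      simp only [nuMap, LinearMap.coe_mk, AddHom.coe_mk] at hv
      linear_combination (norm := module) hv
    have c0 : ℓ v (a x) + 1 / 2 * ℓ v v₀ * ℓ (a x) (a x) + 1 / 2 * ℓ (a x) (x : V) = 0 := by
      have := congrArg (fun w => ℓ w v₁) e
      simp only [map_add, map_sub, map_smul, LinearMap.add_apply, LinearMap.sub_apply,
        LinearMap.smul_apply, LinearMap.zero_apply, map_zero, smul_eq_mul,
        (haN x).2, (hT x x.2).2, hv₀v₁] at this
      linarith
    apply h (ℓ v v₀) x
    rw [c0] at e
    linear_combination (norm := module) e
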